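/- arXiv:1210.1116 — 2 statements merged into one kernel-verified Lean document; each statement's English description precedes it below -/
import Mathlib

section
/- Let P and P̃ be stochastic matrices on E_k = {0,...,k} with p_{k,k} = p̃_{k,k} = 1, both chains started at state 0. Assume there exist two coprime positive integers n_1 and n_2 such that P̃^{n_1} ⊴ P^{n_1} and P̃^{n_2} ⊴ P^{n_2}, and moreover that (P̃^n)_{0,k} ≤ (P^n)_{0,k} for every n = 1,...,n̂(n_1,n_2)-1, where n̂(n_1,n_2) := inf{ r ∈ ℕ : every integer r' ≥ r can be written as r' = a·n_1 + b·n_2 with a, b ∈ ℕ }. Then T_k ⪯_st T̃_k: for every n ∈ ℕ, (P̃^n)_{0,k} ≤ (P^n)_{0,k}. -/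
open Finset Matrix

/-- Usual stochastic order between two vectors on `Fin m`. -/
def stDom {m : ℕ} (μ ν : Fin m → ℝ) : Prop :=
  ∀ j : Fin m, ∑ l ∈ Finset.univ.filter (fun l => j ≤ l), μ l ≤
    ∑ l ∈ Finset.univ.filter (fun l => j ≤ l), ν l

/-- A (row-)stochastic matrix. -/
def IsStochastic {m : ℕ} (P : Matrix (Fin m) (Fin m) ℝ) : Prop :=
  (∀ i j, 0 ≤ P i j) ∧ ∀ i, ∑ j, P i j = 1

/-- The relation `A' ⊴ A`. -/
def tri {m : ℕ} (A' A : Matrix (Fin m) (Fin m) ℝ) : Prop :=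
  ∀ i j : Fin m, i ≤ j → stDom (A' i) (A j)

/-- `n̂(n₁,n₂)`: the least `r` such that every integer `r' ≥ r` can be written
as `a n₁ + b n₂` with `a b ∈ ℕ`. -/
noncomputable def nhat (n1 n2 : ℕ) : ℕ :=
  sInf { r : ℕ | ∀ r' : ℕ, r ≤ r' → ∃ a b : ℕ, r' = a * n1 + b * n2 }

-- Abel summation lemma
lemma abel_mono {m : ℕ} {μ ν : Fin (m+1) → ℝ} (hd : stDom μ ν)
    (hs : ∑ j, μ j = ∑ j, ν j) {h : Fin (m+1) → ℝ} (hm : Monotone h) :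
    ∑ j, μ j * h j ≤ ∑ j, ν j * h j := by
  set g : ℕ → ℝ := fun i => h ⟨min i m, by omega⟩ with hg
  have hgv : ∀ j : Fin (m+1), h j = g j.val := by
    intro j
    have : min j.val m = j.val := Nat.min_eq_left (Nat.lt_succ_iff.mp j.2)
    simp only [hg]
    exact congrArg h (Fin.ext (by simp; omega))
  have hgm : ∀ i i' : ℕ, i ≤ i' → g i ≤ g i' := by
    intro i i' hii'
    exact hm (by simp [Fin.le_def]; omega)
  have key : ∀ (ρ : Fin (m+1) → ℝ), ∑ j, ρ j * h j =
      (∑ j, ρ j) * g 0 + ∑ i ∈ Finset.range m, (g (i+1) - g i) *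
        (∑ j ∈ Finset.univ.filter (fun l : Fin (m+1) => (⟨min (i+1) m, by omega⟩ : Fin (m+1)) ≤ l), ρ j) := by
    intro ρ
    have step : ∀ j : Fin (m+1), ρ j * h j =
        ρ j * g 0 + ∑ i ∈ Finset.range m, (if i < j.val then (g (i+1) - g i) * ρ j else 0) := by
      intro j
      have htel : ∑ i ∈ Finset.range j.val, (g (i+1) - g i) = g j.val - g 0 :=
        Finset.sum_range_sub g j.val
      have hsub : ∑ i ∈ Finset.range m, (if i < j.val then (g (i+1) - g i) * ρ j else 0)
          = ∑ i ∈ Finset.range j.val, (g (i+1) - g i) * ρ j := by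
        rw [← Finset.sum_filter]
        apply Finset.sum_congr _ (fun _ _ => rfl)
        ext i
        simp only [Finset.mem_filter, Finset.mem_range]
        constructor
        · rintro ⟨_, hi⟩; exact hi
        · intro hi; exact ⟨lt_of_lt_of_le hi (Nat.lt_succ_iff.mp j.2), hi⟩
      rw [hsub, ← Finset.sum_mul, htel, hgv j]
      ring
    rw [Finset.sum_congr rfl (fun j _ => step j), Finset.sum_add_distrib, ← Finset.sum_mul]
    congr 1
    rw [Finset.sum_comm]
    refine Finset.sum_congr rfl (fun i hi => ?_)
    rw [← Finset.sum_filter, Finset.mul_sum]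
    refine Finset.sum_congr ?_ (fun j _ => rfl)
    ext j
    simp only [Finset.mem_filter, Finset.mem_univ, true_and, Fin.le_def]
    have him : i < m := Finset.mem_range.mp hi
    constructor
    · intro hj; omega
    · intro hj; omega
  rw [key μ, key ν, hs]
  refine add_le_add le_rfl (Finset.sum_le_sum fun i hi => ?_)
  exact mul_le_mul_of_nonneg_left (hd _) (sub_nonneg.mpr (hgm i (i+1) (Nat.le_succ i)))

lemma isStochastic_mul {m : ℕ} {A B : Matrix (Fin m) (Fin m) ℝ}
    (hA : IsStochastic A) (hB : IsStochastic B) : IsStochastic (A * B) := by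
  constructor
  · intro i j
    rw [Matrix.mul_apply]
    exact Finset.sum_nonneg fun c _ => mul_nonneg (hA.1 i c) (hB.1 c j)
  · intro i
    simp only [Matrix.mul_apply]
    rw [Finset.sum_comm]
    calc ∑ c, ∑ j, A i c * B c j = ∑ c, A i c * ∑ j, B c j := by
          simp [Finset.mul_sum]
      _ = 1 := by simp [hB.2, hA.2 i]

lemma isStochastic_pow {m : ℕ} {A : Matrix (Fin (m+1)) (Fin (m+1)) ℝ}
    (hA : IsStochastic A) : ∀ n : ℕ, IsStochastic (A ^ n) := by
  intro n
  induction n with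
  | zero =>
    refine ⟨fun i j => ?_, fun i => ?_⟩ <;> simp [Matrix.one_apply]
    positivity
  | succ n ih => rw [pow_succ]; exact isStochastic_mul ih hA

lemma tri_mul {m : ℕ} {A' A B' B : Matrix (Fin (m+1)) (Fin (m+1)) ℝ}
    (hA' : IsStochastic A') (hA : IsStochastic A)
    (tA : tri A' A) (tB : tri B' B) : tri (A' * B') (A * B) := by
  intro i j hij t
  set F' : Fin (m+1) → ℝ := fun c => ∑ l ∈ Finset.univ.filter (fun l => t ≤ l), B' c l with hF'
  set F : Fin (m+1) → ℝ := fun c => ∑ l ∈ Finset.univ.filter (fun l => t ≤ l), B c l with hF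
  have hrw : ∀ (C D : Matrix (Fin (m+1)) (Fin (m+1)) ℝ) (r : Fin (m+1)),
      ∑ l ∈ Finset.univ.filter (fun l => t ≤ l), (C * D) r l
        = ∑ c, C r c * (∑ l ∈ Finset.univ.filter (fun l => t ≤ l), D c l) := by
    intro C D r
    simp only [Matrix.mul_apply]
    rw [Finset.sum_comm]
    simp [Finset.mul_sum]
  rw [hrw A' B' i, hrw A B j]
  set h : Fin (m+1) → ℝ := fun c => (Finset.Iic c).sup' ⟨c, Finset.mem_Iic.mpr le_rfl⟩ F' with hh
  have hmono : Monotone h := by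
    intro a b hab
    exact Finset.sup'_mono F' (Finset.Iic_subset_Iic.mpr hab) ⟨a, Finset.mem_Iic.mpr le_rfl⟩
  have hF'h : ∀ c, F' c ≤ h c := fun c => Finset.le_sup' F' (Finset.mem_Iic.mpr le_rfl)
  have hhF : ∀ c c' : Fin (m+1), c ≤ c' → h c ≤ F c' := by
    intro c c' hcc'
    apply Finset.sup'_le
    intro c'' hc''
    exact tB c'' c' (le_trans (Finset.mem_Iic.mp hc'') hcc') t
  calc ∑ c, A' i c * F' c ≤ ∑ c, A' i c * h c :=
        Finset.sum_le_sum fun c _ => mul_le_mul_of_nonneg_left (hF'h c) (hA'.1 i c)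
    _ ≤ ∑ c, A j c * h c := abel_mono (tA i j hij) (by rw [hA'.2 i, hA.2 j]) hmono
    _ ≤ ∑ c, A j c * F c :=
        Finset.sum_le_sum fun c _ => mul_le_mul_of_nonneg_left (hhF c c le_rfl) (hA.1 j c)

lemma tri_one {m : ℕ} : tri (1 : Matrix (Fin (m+1)) (Fin (m+1)) ℝ) 1 := by
  intro i j hij t
  have hrw : ∀ r : Fin (m+1), ∑ l ∈ Finset.univ.filter (fun l => t ≤ l),
      (1 : Matrix (Fin (m+1)) (Fin (m+1)) ℝ) r l = if t ≤ r then 1 else 0 := by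
    intro r
    simp [Matrix.one_apply, Finset.sum_ite_eq, Finset.mem_filter]
  rw [hrw i, hrw j]
  by_cases hti : t ≤ i
  · simp [hti, le_trans hti hij]
  · simp only [hti, if_false]
    split <;> norm_num

lemma tri_pow {m : ℕ} {A' A : Matrix (Fin (m+1)) (Fin (m+1)) ℝ}
    (hA' : IsStochastic A') (hA : IsStochastic A) (tA : tri A' A) :
    ∀ n : ℕ, tri (A' ^ n) (A ^ n) := by
  intro n
  induction n with
  | zero => simpa using tri_one
  | succ n ih =>
    rw [pow_succ, pow_succ]
    exact tri_mul (isStochastic_pow hA' n) (isStochastic_pow hA n) ih tA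


lemma nhat_set_nonempty {n1 n2 : ℕ} (hn1 : 0 < n1) (hn2 : 0 < n2)
    (hcop : Nat.Coprime n1 n2) :
    { r : ℕ | ∀ r' : ℕ, r ≤ r' → ∃ a b : ℕ, r' = a * n1 + b * n2 }.Nonempty := by
  rcases eq_or_lt_of_le (Nat.succ_le_of_lt hn1) with h1 | h1
  · exact ⟨0, fun r' _ => ⟨r', 0, by subst h1; omega⟩⟩
  rcases eq_or_lt_of_le (Nat.succ_le_of_lt hn2) with h2 | h2
  · exact ⟨0, fun r' _ => ⟨0, r', by subst h2; omega⟩⟩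
  refine ⟨n1 * n2, fun r' hr' => ?_⟩
  have hfrob := frobeniusNumber_pair hcop h1 h2
  have hmem : r' ∈ AddSubmonoid.closure ({n1, n2} : Set ℕ) := by
    by_contra hc
    have := hfrob.2 hc
    have hle : n1 + n2 ≤ n1 * n2 := Nat.add_le_mul h1 h2
    omega
  rw [AddSubmonoid.mem_closure_pair] at hmem
  obtain ⟨a, b, hab⟩ := hmem
  exact ⟨a, b, by simpa [smul_eq_mul] using hab.symm⟩


/-- Proposition 1.b (De Santis–Spizzichino): if moreover
`(P̃^n)_{0,k} ≤ (P^n)_{0,k}` for `n = 1, …, n̂(n₁,n₂)-1`, then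
`T_k ⪯_st T̃_k`, i.e. `(P̃^n)_{0,k} ≤ (P^n)_{0,k}` for all `n`. -/
theorem st_order_of_coprime_tri
    (k : ℕ) (P Pt : Matrix (Fin (k + 1)) (Fin (k + 1)) ℝ)
    (hP : IsStochastic P) (hPt : IsStochastic Pt)
    (habs : P (Fin.last k) (Fin.last k) = 1) (habst : Pt (Fin.last k) (Fin.last k) = 1)
    (n1 n2 : ℕ) (hn1 : 0 < n1) (hn2 : 0 < n2) (hcop : Nat.Coprime n1 n2)
    (h1 : tri (Pt ^ n1) (P ^ n1)) (h2 : tri (Pt ^ n2) (P ^ n2))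
    (hsmall : ∀ n : ℕ, 1 ≤ n → n ≤ nhat n1 n2 - 1 →
      (Pt ^ n) 0 (Fin.last k) ≤ (P ^ n) 0 (Fin.last k)) :
    ∀ n : ℕ, (Pt ^ n) 0 (Fin.last k) ≤ (P ^ n) 0 (Fin.last k) := by
  intro n
  rcases Nat.eq_zero_or_pos n with hn0 | hn0
  · subst hn0; simp
  by_cases hcase : n ≤ nhat n1 n2 - 1
  · exact hsmall n hn0 hcase
  · have hge : nhat n1 n2 ≤ n := by omega
    have hmem := Nat.sInf_mem (nhat_set_nonempty hn1 hn2 hcop)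
    obtain ⟨a, b, hab⟩ := hmem n hge
    have htri : tri (Pt ^ n) (P ^ n) := by
      rw [hab, pow_add, pow_add, pow_mul', pow_mul', pow_mul', pow_mul']
      exact tri_mul (isStochastic_pow (isStochastic_pow hPt n1) a)
        (isStochastic_pow (isStochastic_pow hP n1) a)
        (tri_pow (isStochastic_pow hPt n1) (isStochastic_pow hP n1) h1 a)
        (tri_pow (isStochastic_pow hPt n2) (isStochastic_pow hP n2) h2 b)
    have := htri 0 0 le_rfl (Fin.last k)
    have hfilt : (Finset.univ.filter (fun l : Fin (k+1) => Fin.last k ≤ l)) = {Fin.last k} := by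
      ext l
      simp [Fin.le_def, Fin.ext_iff, Fin.last]
      omega
    rwa [hfilt, Finset.sum_singleton, Finset.sum_singleton] at this
end

section
/- Let P̃ be a stochastic matrix on E_k = {0,...,k} with p̃_{k,k} = 1 whose leading k×k submatrix Q̃ is primitive, and let μ̃ denote the spectral radius of Q̃. Then the large deviation equality lim_{n→∞} (1/n) · ln(1 - (P̃^n)_{0,k}) = ln μ̃ holds (note that 1 - (P̃^n)_{0,k} = ∑_{0≤j≤k-1} (Q̃^n)_{0,j} > 0 for all n, and μ̃ > 0 by primitivity). -/
open Finset Matrix Filter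

/-- The leading `k × k` submatrix of a matrix on `{0, …, k}`. -/
def lead {k : ℕ} (P : Matrix (Fin (k + 1)) (Fin (k + 1)) ℝ) :
    Matrix (Fin k) (Fin k) ℝ :=
  P.submatrix Fin.castSucc Fin.castSucc

/-- The spectral radius of a real matrix: the supremum of the moduli of its
complex eigenvalues. -/
noncomputable def specRad {m : ℕ} (Q : Matrix (Fin m) (Fin m) ℝ) : ℝ :=
  sSup { r : ℝ | ∃ z ∈ spectrum ℂ (Q.map Complex.ofReal), r = ‖z‖ }

/-- `Q` is primitive: some power of `Q` has all entries strictly positive. -/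
def IsPrimitive {m : ℕ} (Q : Matrix (Fin m) (Fin m) ℝ) : Prop :=
  ∃ n : ℕ, 0 < n ∧ ∀ i j, 0 < (Q ^ n) i j

open Topology
open scoped NNReal ENNReal

lemma pow_entry_nonneg {K : ℕ} {Q : Matrix (Fin K) (Fin K) ℝ}
    (hQ : ∀ i j, 0 ≤ Q i j) : ∀ (n : ℕ) (i j : Fin K), 0 ≤ (Q ^ n) i j := by
  intro n
  induction n with
  | zero => intro i j; rw [pow_zero]; by_cases h : i = j <;> simp [Matrix.one_apply, h]
  | succ n ih =>
    intro i j
    rw [pow_succ, Matrix.mul_apply]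
    exact Finset.sum_nonneg fun l _ => mul_nonneg (ih i l) (hQ l j)

attribute [local instance] Matrix.frobeniusSeminormedAddCommGroup
  Matrix.frobeniusNormedAddCommGroup Matrix.frobeniusNormedSpace
  Matrix.frobeniusNormedRing Matrix.frobeniusNormedAlgebra

section NormCompare
variable {K : ℕ}

lemma frob_eq_sqrt (B : Matrix (Fin K) (Fin K) ℂ) :
    ‖B‖ = Real.sqrt (∑ i, ∑ j, ‖B i j‖ ^ 2) := by
  rw [Matrix.frobenius_norm_def, Real.sqrt_eq_rpow]
  simp_rw [Real.rpow_two]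

lemma frob_le_sum (B : Matrix (Fin K) (Fin K) ℝ) (hB : ∀ i j, 0 ≤ B i j) :
    ‖B.map Complex.ofReal‖ ≤ ∑ i, ∑ j, B i j := by
  have hent : ∀ i j, ‖(B.map Complex.ofReal) i j‖ = B i j := by
    intro i j
    simp [Matrix.map_apply, Complex.norm_real, Real.norm_eq_abs, abs_of_nonneg (hB i j)]
  rw [frob_eq_sqrt]
  simp_rw [hent]
  have h1 : ∑ i, ∑ j, (B i j) ^ 2 ≤ (∑ i, ∑ j, B i j) ^ 2 := by
    calc ∑ i, ∑ j, (B i j) ^ 2 ≤ ∑ i, (∑ j, B i j) ^ 2 :=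
          Finset.sum_le_sum fun i _ =>
            Finset.sum_sq_le_sq_sum_of_nonneg fun j _ => hB i j
      _ ≤ (∑ i, ∑ j, B i j) ^ 2 :=
          Finset.sum_sq_le_sq_sum_of_nonneg fun i _ =>
            Finset.sum_nonneg fun j _ => hB i j
  calc Real.sqrt (∑ i, ∑ j, (B i j) ^ 2) ≤ Real.sqrt ((∑ i, ∑ j, B i j) ^ 2) :=
        Real.sqrt_le_sqrt h1
    _ = ∑ i, ∑ j, B i j :=
        Real.sqrt_sq (Finset.sum_nonneg fun i _ => Finset.sum_nonneg fun j _ => hB i j)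

lemma sum_le_frob (B : Matrix (Fin K) (Fin K) ℝ) (hB : ∀ i j, 0 ≤ B i j) :
    ∑ i, ∑ j, B i j ≤ ((K : ℝ)) ^ 2 * ‖B.map Complex.ofReal‖ := by
  have hent : ∀ i j, B i j = ‖(B.map Complex.ofReal) i j‖ := by
    intro i j
    simp [Matrix.map_apply, Complex.norm_real, Real.norm_eq_abs, abs_of_nonneg (hB i j)]
  have hentle : ∀ (i j : Fin K), ‖(B.map Complex.ofReal) i j‖ ≤ ‖B.map Complex.ofReal‖ := by
    intro i j
    rw [frob_eq_sqrt]
    have h1 : ‖(B.map Complex.ofReal) i j‖ ^ 2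
        ≤ ∑ i', ∑ j', ‖(B.map Complex.ofReal) i' j'‖ ^ 2 := by
      calc ‖(B.map Complex.ofReal) i j‖ ^ 2
          ≤ ∑ j', ‖(B.map Complex.ofReal) i j'‖ ^ 2 :=
            Finset.single_le_sum (f := fun j' => ‖(B.map Complex.ofReal) i j'‖ ^ 2)
              (fun j' _ => sq_nonneg _) (Finset.mem_univ j)
        _ ≤ ∑ i', ∑ j', ‖(B.map Complex.ofReal) i' j'‖ ^ 2 :=
            Finset.single_le_sum
              (f := fun i' => ∑ j', ‖(B.map Complex.ofReal) i' j'‖ ^ 2)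
              (fun i' _ => Finset.sum_nonneg fun j' _ => sq_nonneg _) (Finset.mem_univ i)
    calc ‖(B.map Complex.ofReal) i j‖
        = Real.sqrt (‖(B.map Complex.ofReal) i j‖ ^ 2) := (Real.sqrt_sq (norm_nonneg _)).symm
      _ ≤ _ := Real.sqrt_le_sqrt h1
  calc ∑ i, ∑ j, B i j ≤ ∑ i : Fin K, ∑ j : Fin K, ‖B.map Complex.ofReal‖ := by
        refine Finset.sum_le_sum fun i _ => Finset.sum_le_sum fun j _ => ?_
        rw [hent i j]; exact hentle i j
    _ = ((K : ℝ)) ^ 2 * ‖B.map Complex.ofReal‖ := by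
        simp [Finset.sum_const, Fintype.card_fin]
        ring

end NormCompare

lemma aux_main (k : ℕ) (Q : Matrix (Fin (k+1)) (Fin (k+1)) ℝ)
    (hQ : ∀ i j, 0 ≤ Q i j) (hprim : ∃ n : ℕ, 0 < n ∧ ∀ i j, 0 < (Q ^ n) i j) :
    Tendsto (fun n : ℕ => (1 / (n : ℝ)) * Real.log (∑ j, (Q ^ n) 0 j)) atTop
      (𝓝 (Real.log (specRad Q))) := by
  classical
  obtain ⟨m, hm, hpos⟩ := hprim
  haveI : CompleteSpace (Matrix (Fin (k+1)) (Fin (k+1)) ℂ) := FiniteDimensional.complete ℂ _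
  set A : Matrix (Fin (k+1)) (Fin (k+1)) ℂ := Q.map Complex.ofReal with hA
  have hApow : ∀ n : ℕ, A ^ n = (Q ^ n).map Complex.ofReal := by
    intro n
    have := map_pow (Complex.ofRealHom.mapMatrix (m := Fin (k+1))) Q n
    simp only [RingHom.mapMatrix_apply] at this; exact this.symm
  have hQn := pow_entry_nonneg hQ
  set s : ℕ → ℝ := fun n => ∑ i, ∑ j, (Q ^ n) i j with hs
  set r : ℕ → ℝ := fun n => ∑ j, (Q ^ n) 0 j with hr
  set C : ℝ := ((k : ℝ) + 1) ^ 2 with hC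
  have hCpos : 0 < C := by positivity
  obtain ⟨δ, hδpos, hδle⟩ : ∃ δ : ℝ, 0 < δ ∧ ∀ i j, δ ≤ (Q ^ m) i j := by
    obtain ⟨p, hp⟩ := Finite.exists_min (fun p : Fin (k+1) × Fin (k+1) => (Q ^ m) p.1 p.2)
    exact ⟨(Q ^ m) p.1 p.2, hpos p.1 p.2, fun i j => hp (i, j)⟩
  have hrow_le_s : ∀ (n : ℕ) (i : Fin (k+1)), ∑ j, (Q ^ n) i j ≤ s n := by
    intro n i
    exact Finset.single_le_sum (f := fun i => ∑ j, (Q ^ n) i j)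
      (fun i' _ => Finset.sum_nonneg fun j _ => hQn n i' j) (Finset.mem_univ i)
  have hs_nonneg : ∀ n, 0 ≤ s n := fun n =>
    Finset.sum_nonneg fun i _ => Finset.sum_nonneg fun j _ => hQn n i j
  have hentry_le_s : ∀ (n : ℕ) (i j : Fin (k+1)), (Q ^ n) i j ≤ s n := by
    intro n i j
    calc (Q ^ n) i j ≤ ∑ j', (Q ^ n) i j' :=
          Finset.single_le_sum (fun j' _ => hQn n i j') (Finset.mem_univ j)
      _ ≤ s n := hrow_le_s n i
  have hsub : ∀ a b : ℕ, s (a + b) ≤ s a * s b := by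
    intro a b
    have h1 : s (a+b) = ∑ i, ∑ l, (Q^a) i l * (∑ j, (Q^b) l j) := by
      simp only [hs, pow_add, Matrix.mul_apply]
      refine Finset.sum_congr rfl fun i _ => ?_
      rw [Finset.sum_comm]
      exact Finset.sum_congr rfl fun l _ => (Finset.mul_sum _ _ _).symm
    rw [h1]
    calc ∑ i, ∑ l, (Q^a) i l * (∑ j, (Q^b) l j)
        ≤ ∑ i, ∑ l, (Q^a) i l * s b := by
          refine Finset.sum_le_sum fun i _ => Finset.sum_le_sum fun l _ => ?_
          exact mul_le_mul_of_nonneg_left (hrow_le_s b l) (hQn a i l)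
      _ = s a * s b := by
          simp only [← Finset.sum_mul, hs]
  have hlow : ∀ n : ℕ, δ * s n ≤ r (m + n) := by
    intro n
    have h1 : r (m+n) = ∑ i, ∑ j, (Q^m) 0 i * (Q^n) i j := by
      simp only [hr, pow_add, Matrix.mul_apply]
      rw [Finset.sum_comm]
    rw [h1]
    have h2 : ∀ i ∈ Finset.univ, δ * (∑ j, (Q^n) i j) ≤ ∑ j, (Q^m) 0 i * (Q^n) i j := by
      intro i _
      have h3 : (∑ j, (Q^m) 0 i * (Q^n) i j) = (Q^m) 0 i * ∑ j, (Q^n) i j :=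
        (Finset.mul_sum _ _ _).symm
      rw [h3]
      exact mul_le_mul_of_nonneg_right (hδle 0 i) (Finset.sum_nonneg fun j _ => hQn n i j)
    calc δ * s n = ∑ i, δ * (∑ j, (Q^n) i j) := by rw [hs]; exact Finset.mul_sum _ _ _
      _ ≤ _ := Finset.sum_le_sum h2
  have hpow_pos : ∀ (t : ℕ) (i j : Fin (k+1)), 0 < (Q ^ (m * (t+1))) i j := by
    intro t
    induction t with
    | zero => simpa using hpos
    | succ t ih =>
      intro i j
      have hmm : m * (t+2) = m * (t+1) + m := by ring
      rw [hmm, pow_add, Matrix.mul_apply]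
      exact Finset.sum_pos (fun l _ => mul_pos (ih i l) (hpos l j)) Finset.univ_nonempty
  have hspos : ∀ n, 0 < s n := by
    intro n
    have hle : n ≤ m * (n+1) :=
      le_trans (Nat.le_succ n) (Nat.le_mul_of_pos_left _ hm)
    obtain ⟨u, hu⟩ : ∃ u, m * (n+1) = n + u := ⟨m*(n+1) - n, by omega⟩
    have h1 : 0 < s (m * (n+1)) := by
      rw [hs]
      exact Finset.sum_pos (fun i _ => Finset.sum_pos (fun j _ => hpow_pos n i j)
        Finset.univ_nonempty) Finset.univ_nonempty
    have h2 : s (m*(n+1)) ≤ s n * s u := by rw [hu]; exact hsub n u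
    nlinarith [hs_nonneg n, hs_nonneg u]
  have hrpos : ∀ n, 0 < r n := by
    intro n
    rcases lt_or_ge 0 (r n) with h | h
    · exact h
    exfalso
    have hrn0 : r n = 0 :=
      le_antisymm h (Finset.sum_nonneg fun j _ => hQn n 0 j)
    have hz : ∀ l, (Q ^ n) 0 l = 0 := by
      have := (Finset.sum_eq_zero_iff_of_nonneg (fun l _ => hQn n 0 l)).mp hrn0
      exact fun l => this l (Finset.mem_univ l)
    have hzero : r (n + m) = 0 := by
      simp only [hr, pow_add, Matrix.mul_apply]
      exact Finset.sum_eq_zero fun j _ => Finset.sum_eq_zero fun l _ => by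
        rw [hz l, zero_mul]
    have hlt : (0:ℝ) < r (n + m) := by
      calc (0:ℝ) < δ * s n := mul_pos hδpos (hspos n)
        _ ≤ r (m + n) := hlow n
        _ = r (n + m) := by rw [add_comm]
    rw [hzero] at hlt
    exact lt_irrefl 0 hlt
  -- norm comparisons
  have hns : ∀ n, ‖A ^ n‖ ≤ s n := by
    intro n
    rw [hApow n, hs]
    exact frob_le_sum (Q ^ n) (hQn n)
  have hsn : ∀ n, s n ≤ C * ‖A ^ n‖ := by
    intro n
    rw [hApow n, hs, hC]
    have := sum_le_frob (Q ^ n) (hQn n)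
    have hcast : ((k+1 : ℕ) : ℝ) = (k:ℝ) + 1 := by push_cast; ring
    calc (∑ i, ∑ j, (Q ^ n) i j) ≤ ((k+1 : ℕ) : ℝ)^2 * ‖(Q^n).map Complex.ofReal‖ := this
      _ = ((k:ℝ)+1)^2 * ‖(Q^n).map Complex.ofReal‖ := by rw [hcast]
  have hAnpos : ∀ n, 0 < ‖A ^ n‖ := by
    intro n
    nlinarith [hspos n, hsn n, norm_nonneg (A ^ n)]
  -- spectrum and Gelfand
  have hG := spectrum.pow_nnnorm_pow_one_div_tendsto_nhds_spectralRadius A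
  have hne : (spectrum ℂ A).Nonempty := spectrum.nonempty A
  obtain ⟨z0, hz0mem, hz0max⟩ := (spectrum.isCompact (𝕜 := ℂ) A).exists_isMaxOn hne
    (continuous_norm.continuousOn)
  have hz0max' : ∀ z ∈ spectrum ℂ A, ‖z‖ ≤ ‖z0‖ := isMaxOn_iff.mp hz0max
  have hspec : spectralRadius ℂ A = ((‖z0‖₊ : ℝ≥0) : ℝ≥0∞) := by
    unfold spectralRadius
    apply le_antisymm
    · refine iSup₂_le fun z hz => ?_
      refine ENNReal.coe_le_coe.mpr ?_
      have h1 : ‖z‖ ≤ ‖z0‖ := by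
        simpa using hz0max' z hz
      exact_mod_cast h1
    · exact le_iSup₂ (f := fun z (_ : z ∈ spectrum ℂ A) => ((‖z‖₊ : ℝ≥0) : ℝ≥0∞)) z0 hz0mem
  have hfin : spectralRadius ℂ A ≠ ⊤ := by rw [hspec]; exact ENNReal.coe_ne_top
  have hGr : Tendsto (fun n : ℕ => ‖A ^ n‖ ^ (1/(n:ℝ))) atTop (𝓝 (‖z0‖)) := by
    have h1 := (ENNReal.tendsto_toReal hfin).comp hG
    have h2 : (spectralRadius ℂ A).toReal = ‖z0‖ := by
      rw [hspec]
      simp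
    rw [h2] at h1
    refine h1.congr fun n => ?_
    simp only [Function.comp_apply]
    rw [← ENNReal.toReal_rpow, ENNReal.coe_toReal, coe_nnnorm]
  -- positivity of the spectral radius
  have hmt : Tendsto (fun t : ℕ => m * (t+1)) atTop atTop := by
    apply tendsto_atTop_atTop_of_monotone
    · intro a b hab
      exact Nat.mul_le_mul_left m (Nat.succ_le_succ hab)
    · intro b
      refine ⟨b, ?_⟩
      have := Nat.le_mul_of_pos_left (b+1) hm
      omega
  have hsub1 : Tendsto (fun t : ℕ => ‖A ^ (m*(t+1))‖ ^ (1/((m*(t+1) : ℕ):ℝ))) atTop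
      (𝓝 (‖z0‖)) := hGr.comp hmt
  have hentry_ge : ∀ (t : ℕ) (i j : Fin (k+1)), δ^(t+1) ≤ (Q ^ (m * (t+1))) i j := by
    intro t
    induction t with
    | zero => intro i j; simpa using hδle i j
    | succ t ih =>
      intro i j
      have hmm : m * (t+2) = m * (t+1) + m := by ring
      rw [hmm, pow_add Q (m*(t+1)) m, Matrix.mul_apply]
      calc δ^(t+2) = δ^(t+1) * δ := by ring
        _ ≤ (Q^(m*(t+1))) i j * (Q^m) j j :=
            mul_le_mul (ih i j) (hδle j j) (le_of_lt hδpos) (hQn _ i j)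
        _ ≤ ∑ l, (Q^(m*(t+1))) i l * (Q^m) l j :=
            Finset.single_le_sum (fun l _ => mul_nonneg (hQn _ i l) (hQn _ l j))
              (Finset.mem_univ j)
  have hlowA : ∀ t : ℕ, δ^(t+1) / C ≤ ‖A ^ (m*(t+1))‖ := by
    intro t
    have h1 : δ^(t+1) ≤ s (m*(t+1)) := le_trans (hentry_ge t 0 0) (hentry_le_s _ 0 0)
    have h2 := hsn (m*(t+1))
    rw [div_le_iff₀ hCpos, mul_comm]
    linarith
  set LL := Real.log δ with hLL
  have hwle : ∀ t : ℕ, Real.exp ((((t:ℝ)+1) * LL - Real.log C) / ((m:ℝ) * ((t:ℝ)+1)))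
      ≤ ‖A ^ (m*(t+1))‖ ^ (1/((m*(t+1) : ℕ):ℝ)) := by
    intro t
    have hbpos : 0 < δ^(t+1) / C := div_pos (pow_pos hδpos _) hCpos
    have h1 : (δ^(t+1) / C) ^ (1/((m*(t+1):ℕ):ℝ))
        ≤ ‖A ^ (m*(t+1))‖ ^ (1/((m*(t+1):ℕ):ℝ)) :=
      Real.rpow_le_rpow (le_of_lt hbpos) (hlowA t) (by positivity)
    refine le_trans (le_of_eq ?_) h1
    rw [Real.rpow_def_of_pos hbpos]
    congr 1
    rw [Real.log_div (by positivity) (ne_of_gt hCpos), Real.log_pow]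
    have hcast : ((m*(t+1) : ℕ):ℝ) = (m:ℝ) * ((t:ℝ)+1) := by push_cast; ring
    rw [hcast, hLL]
    have hne' : (m:ℝ) * ((t:ℝ)+1) ≠ 0 := by positivity
    field_simp
    rw [Real.log_pow]; push_cast
    try ring
  have hexp_lim : Tendsto (fun t : ℕ => (((t:ℝ)+1) * LL - Real.log C) / ((m:ℝ) * ((t:ℝ)+1)))
      atTop (𝓝 (LL / m)) := by
    have h1 : Tendsto (fun t : ℕ => (t:ℝ)+1) atTop atTop :=
      tendsto_atTop_add_const_right _ 1 tendsto_natCast_atTop_atTop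
    have h2 : Tendsto (fun t : ℕ => (m:ℝ)*((t:ℝ)+1)) atTop atTop :=
      h1.const_mul_atTop (by exact_mod_cast hm)
    have h3 : Tendsto (fun t : ℕ => ((m:ℝ)*((t:ℝ)+1))⁻¹) atTop (𝓝 0) :=
      tendsto_inv_atTop_zero.comp h2
    have h4 : Tendsto (fun t : ℕ => LL/m - Real.log C * ((m:ℝ)*((t:ℝ)+1))⁻¹) atTop
        (𝓝 (LL/m - Real.log C * 0)) := tendsto_const_nhds.sub (tendsto_const_nhds.mul h3)
    rw [mul_zero, sub_zero] at h4
    refine h4.congr fun t => ?_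
    have hmne : ((m:ℝ)*((t:ℝ)+1)) ≠ 0 := by positivity
    have hm0 : (m:ℝ) ≠ 0 := by positivity
    field_simp
    try ring
  have hδm_le : Real.exp (LL / m) ≤ ‖z0‖ := by
    have hrhs : Tendsto (fun t : ℕ =>
        Real.exp ((((t:ℝ)+1) * LL - Real.log C) / ((m:ℝ) * ((t:ℝ)+1)))) atTop
        (𝓝 (Real.exp (LL / m))) := (Real.continuous_exp.tendsto _).comp hexp_lim
    exact le_of_tendsto_of_tendsto hrhs hsub1 (Filter.Eventually.of_forall hwle)
  have hρpos : 0 < ‖z0‖ := lt_of_lt_of_le (Real.exp_pos _) hδm_le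
  -- log limits
  have hlogA : Tendsto (fun n : ℕ => (1/(n:ℝ)) * Real.log ‖A ^ n‖) atTop
      (𝓝 (Real.log (‖z0‖))) := by
    have h1 := ((Real.continuousAt_log hρpos.ne').tendsto).comp hGr
    refine h1.congr fun n => ?_
    simp only [Function.comp_apply]
    rw [Real.log_rpow (hAnpos n)]
  have hM : Tendsto (fun n : ℕ => (1/(n:ℝ)) * Real.log (s n)) atTop
      (𝓝 (Real.log (‖z0‖))) := by
    have hc : Tendsto (fun n : ℕ => (1/(n:ℝ)) * Real.log C) atTop (𝓝 0) := by
      simpa using tendsto_one_div_atTop_nhds_zero_nat.mul_const (Real.log C)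
    have hup := hc.add hlogA
    rw [zero_add] at hup
    refine tendsto_of_tendsto_of_tendsto_of_le_of_le hlogA hup ?_ ?_
    · intro n
      dsimp only
      exact mul_le_mul_of_nonneg_left (Real.log_le_log (hAnpos n) (hns n)) (by positivity)
    · intro n
      dsimp only
      rw [← mul_add]
      refine mul_le_mul_of_nonneg_left ?_ (by positivity)
      calc Real.log (s n) ≤ Real.log (C * ‖A ^ n‖) := Real.log_le_log (hspos n) (hsn n)
        _ = Real.log C + Real.log ‖A ^ n‖ :=
            Real.log_mul (ne_of_gt hCpos) (ne_of_gt (hAnpos n))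
  -- the row-sum limit
  have key : Tendsto (fun n : ℕ => (1/(n:ℝ)) * Real.log (r n)) atTop
      (𝓝 (Real.log (‖z0‖))) := by
    rw [← tendsto_add_atTop_iff_nat m]
    have hup : Tendsto (fun n : ℕ => (1/((n+m : ℕ):ℝ)) * Real.log (s (n+m))) atTop
        (𝓝 (Real.log (‖z0‖))) := (tendsto_add_atTop_iff_nat m).2 hM
    have hnm : Tendsto (fun n : ℕ => (n:ℝ)+m) atTop atTop :=
      tendsto_atTop_add_const_right _ _ tendsto_natCast_atTop_atTop
    have hinv : Tendsto (fun n : ℕ => 1/((n:ℝ)+m)) atTop (𝓝 0) := by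
      simpa [one_div, Function.comp_def] using tendsto_inv_atTop_zero.comp hnm
    have hmpos : (0:ℝ) < m := by exact_mod_cast hm
    have hfrac : Tendsto (fun n : ℕ => (n:ℝ)/((n:ℝ)+m)) atTop (𝓝 1) := by
      have h1 : Tendsto (fun n : ℕ => 1 - (m:ℝ)*(1/((n:ℝ)+m))) atTop
          (𝓝 (1 - (m:ℝ)*0)) := tendsto_const_nhds.sub (tendsto_const_nhds.mul hinv)
      rw [mul_zero, sub_zero] at h1
      refine h1.congr fun n => ?_
      have hne' : ((n:ℝ)+m) ≠ 0 := by positivity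
      field_simp
      ring
    have hlowlim : Tendsto (fun n : ℕ =>
        Real.log δ * (1/((n:ℝ)+m)) + ((1/(n:ℝ)) * Real.log (s n)) * ((n:ℝ)/((n:ℝ)+m)))
        atTop (𝓝 (Real.log δ * 0 + Real.log (‖z0‖) * 1)) :=
      (tendsto_const_nhds.mul hinv).add (hM.mul hfrac)
    rw [mul_zero, mul_one, zero_add] at hlowlim
    refine tendsto_of_tendsto_of_tendsto_of_le_of_le' hlowlim hup ?_ ?_
    · filter_upwards [eventually_ge_atTop 1] with n hn
      have hn0 : (n:ℝ) ≠ 0 := by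
        have : (1:ℝ) ≤ (n:ℝ) := by exact_mod_cast hn
        linarith
      have hnmpos : (0:ℝ) < (n:ℝ)+m := by positivity
      have hlog : Real.log δ + Real.log (s n) ≤ Real.log (r (n+m)) := by
        rw [← Real.log_mul (ne_of_gt hδpos) (ne_of_gt (hspos n))]
        refine Real.log_le_log (mul_pos hδpos (hspos n)) ?_
        calc δ * s n ≤ r (m+n) := hlow n
          _ = r (n+m) := by rw [add_comm]
      have hcast : ((n+m : ℕ):ℝ) = (n:ℝ)+m := by push_cast; ring
      calc Real.log δ * (1/((n:ℝ)+m)) + ((1/(n:ℝ)) * Real.log (s n)) * ((n:ℝ)/((n:ℝ)+m))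
          = (Real.log δ + Real.log (s n)) * (1/((n:ℝ)+m)) := by
            field_simp
            try ring
        _ ≤ (Real.log (r (n+m))) * (1/((n:ℝ)+m)) :=
            mul_le_mul_of_nonneg_right hlog (by positivity)
        _ = (1/((n+m : ℕ):ℝ)) * Real.log (r (n+m)) := by rw [hcast]; ring
    · refine Filter.Eventually.of_forall fun n => ?_
      refine mul_le_mul_of_nonneg_left ?_ (by positivity)
      refine Real.log_le_log (hrpos (n+m)) ?_
      show r (n+m) ≤ s (n+m)
      rw [hr]
      exact hrow_le_s (n+m) 0
  -- identify specRad with |z0|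
  have hfinal : specRad Q = ‖z0‖ := by
    unfold specRad
    rw [← hA]
    apply le_antisymm
    · refine csSup_le ⟨‖z0‖, ⟨z0, hz0mem, rfl⟩⟩ ?_
      rintro x ⟨z, hz, rfl⟩
      exact hz0max' z hz
    · refine le_csSup ⟨‖z0‖, ?_⟩ ⟨z0, hz0mem, rfl⟩
      rintro x ⟨z, hz, rfl⟩
      exact hz0max' z hz
  rw [hfinal]
  have : (fun n : ℕ => (1 / (n : ℝ)) * Real.log (∑ j, (Q ^ n) 0 j))
      = fun n : ℕ => (1/(n:ℝ)) * Real.log (r n) := by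
    funext n
    rw [hr]
  rw [this]
  exact key

section Struct
variable {k : ℕ} {Pt : Matrix (Fin (k + 1)) (Fin (k + 1)) ℝ}

lemma last_row (hPt : IsStochastic Pt) (habst : Pt (Fin.last k) (Fin.last k) = 1) :
    ∀ j, Pt (Fin.last k) j = if Fin.last k = j then 1 else 0 := by
  intro j
  rcases eq_or_ne (Fin.last k) j with h | h
  · simp [← h, habst]
  · simp only [h, if_false]
    have hsum := hPt.2 (Fin.last k)
    rw [← Finset.add_sum_erase _ _ (Finset.mem_univ (Fin.last k)), habst] at hsum
    have h0 : ∑ l ∈ Finset.univ.erase (Fin.last k), Pt (Fin.last k) l = 0 := by linarith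
    have := (Finset.sum_eq_zero_iff_of_nonneg (fun l _ => hPt.1 (Fin.last k) l)).mp h0
    exact this j (Finset.mem_erase.mpr ⟨h.symm, Finset.mem_univ j⟩)

lemma pow_block (hPt : IsStochastic Pt) (habst : Pt (Fin.last k) (Fin.last k) = 1) :
    ∀ (n : ℕ) (i j : Fin k),
      (Pt ^ n) i.castSucc j.castSucc = ((lead Pt) ^ n) i j := by
  intro n
  induction n with
  | zero =>
    intro i j
    rw [pow_zero, pow_zero]
    by_cases h : i = j <;> simp [Matrix.one_apply, Fin.castSucc_inj, h]
  | succ n ih =>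
    intro i j
    rw [pow_succ, pow_succ, Matrix.mul_apply, Matrix.mul_apply]
    rw [Fin.sum_univ_castSucc]
    have hlast : Pt (Fin.last k) j.castSucc = 0 := by
      rw [last_row hPt habst]
      simp [(Fin.castSucc_lt_last j).ne']
    rw [hlast, mul_zero, add_zero]
    exact Finset.sum_congr rfl fun l _ => by rw [ih i l]; rfl

lemma pow_rowsum (hPt : IsStochastic Pt) :
    ∀ (n : ℕ) (i : Fin (k + 1)), ∑ j, (Pt ^ n) i j = 1 := by
  intro n
  induction n with
  | zero => intro i; rw [pow_zero]; simp [Matrix.one_apply]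
  | succ n ih =>
    intro i
    simp_rw [pow_succ, Matrix.mul_apply]
    rw [Finset.sum_comm]
    simp_rw [← Finset.mul_sum, hPt.2]
    simpa using ih i

end Struct

/-- Remark 4 (De Santis–Spizzichino), large deviation equality: for a
stochastic matrix `P̃` with `k` absorbing and primitive taboo matrix `Q̃` of
spectral radius `μ̃`, one has `(1/n) ln(1 - (P̃^n)_{0,k}) → ln μ̃`. -/
theorem large_deviation_hitting_time
    (k : ℕ) (Pt : Matrix (Fin (k + 1)) (Fin (k + 1)) ℝ)
    (hPt : IsStochastic Pt) (habst : Pt (Fin.last k) (Fin.last k) = 1)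
    (hprim : _root_.IsPrimitive (lead Pt)) :
    Tendsto (fun n : ℕ => (1 / (n : ℝ)) * Real.log (1 - (Pt ^ n) 0 (Fin.last k)))
      atTop (nhds (Real.log (specRad (lead Pt)))) := by
  cases k with
  | zero =>
    have hP1 : ∀ n : ℕ, (Pt ^ n) 0 (Fin.last 0) = 1 := by
      have hP : Pt = 1 := by
        ext i j
        fin_cases i; fin_cases j
        simpa using habst
      intro n
      rw [hP, one_pow]
      rfl
    have hempty : spectrum ℂ ((lead Pt).map Complex.ofReal) = ∅ := by
      ext z
      simp only [Set.mem_empty_iff_false, iff_false]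
      intro hz
      exact (spectrum.notMem_iff.mpr (isUnit_of_subsingleton _)) hz
    have h0 : Real.log (specRad (lead Pt)) = 0 := by
      have hset : { r : ℝ | ∃ z ∈ spectrum ℂ ((lead Pt).map Complex.ofReal),
          r = ‖z‖ } = ∅ := by
        simp [hempty]
      rw [specRad, hset, Real.sSup_empty, Real.log_zero]
    have hfun : (fun n : ℕ => (1 / (n : ℝ)) * Real.log (1 - (Pt ^ n) 0 (Fin.last 0)))
        = fun _ => (0:ℝ) := by
      funext n
      rw [hP1 n]
      simp
    rw [hfun, h0]
    exact tendsto_const_nhds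
  | succ k' =>
    have hkey : ∀ n : ℕ, 1 - (Pt ^ n) 0 (Fin.last (k'+1)) = ∑ j, ((lead Pt) ^ n) 0 j := by
      intro n
      have h1 := pow_rowsum hPt n 0
      rw [Fin.sum_univ_castSucc] at h1
      have h2 : ∀ j : Fin (k'+1), (Pt ^ n) 0 (Fin.castSucc j) = ((lead Pt) ^ n) 0 j := by
        intro j
        have := pow_block hPt habst n 0 j
        rwa [Fin.castSucc_zero] at this
      simp_rw [h2] at h1
      linarith
    have hQnn : ∀ i j, 0 ≤ (lead Pt) i j := fun i j => hPt.1 _ _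
    have hmain := aux_main k' (lead Pt) hQnn hprim
    refine hmain.congr fun n => ?_
    rw [hkey n]
end
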